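/- Let f: C → C be a chain map of a cochain complex over the Novikov ring Λ₀ such that f is the identity modulo the maximal ideal of Λ₀ (i.e., f ≡ id modulo positive-valuation terms) and C is complete with respect to the valuation filtration. Then f is a chain homotopy equivalence; moreover if f² is chain homotopic to f, then f is chain homotopic to the identity. -/

import Mathlib

/-!
STATEMENT 9: Let `f : C ⟶ C` be a chain map of a cochain complex over the Novikov ring
`Λ₀` which is the identity modulo the maximal ideal (i.e. `f ≡ id` modulo positive
valuation), where `C` is complete with respect to the valuation filtration.  Then `f` is a
chain homotopy equivalence; moreover, if `f²` is chain homotopic to `f`, then `f` is chain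
homotopic to the identity.

The Novikov ring is abstracted to a commutative ring `R` with a maximal ideal `I`, and
completeness to `I`-adic completeness of each term of the complex.
-/

open CategoryTheory

lemma bijective_of_congr_id {R : Type} [CommRing R] (I : Ideal R)
    {M : Type*} [AddCommGroup M] [Module R M] [IsAdicComplete I M]
    (u : M →ₗ[R] M) (hu : ∀ x, u x - x ∈ I • (⊤ : Submodule R M)) :
    Function.Bijective u := by
  set n : M →ₗ[R] M := u - LinearMap.id with hn
  have hnx : ∀ x, n x ∈ I • (⊤ : Submodule R M) := fun x => hu x
  have hux : ∀ x, u x = x + n x := by intro x; simp [hn]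
  have key : ∀ (k : ℕ) (x : M), x ∈ (I ^ k • ⊤ : Submodule R M) →
      n x ∈ (I ^ (k + 1) • ⊤ : Submodule R M) := by
    intro k x hx
    have hmem : n x ∈ (I ^ k • ⊤ : Submodule R M).map n :=
      Submodule.mem_map_of_mem hx
    rw [Submodule.map_smul''] at hmem
    have hle : (I ^ k • (⊤ : Submodule R M).map n) ≤ I ^ (k + 1) • ⊤ := by
      have h1 : (⊤ : Submodule R M).map n ≤ I • ⊤ := by
        rintro y ⟨z, -, rfl⟩; exact hnx z
      calc I ^ k • (⊤ : Submodule R M).map n ≤ I ^ k • (I • (⊤ : Submodule R M)) :=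
            Submodule.smul_mono le_rfl h1
        _ = I ^ (k + 1) • ⊤ := by
            rw [← Submodule.smul_assoc, pow_succ, Ideal.smul_eq_mul]
    exact hle hmem
  have nk : ∀ (k : ℕ) {x : M}, x ∈ (I ^ k • ⊤ : Submodule R M) →
      n x ∈ (I ^ k • ⊤ : Submodule R M) := fun k x hx =>
    Submodule.smul_mono (Ideal.pow_le_pow_right k.le_succ) le_rfl (key k _ hx)
  have uk : ∀ (k : ℕ) {x : M}, x ∈ (I ^ k • ⊤ : Submodule R M) →
      u x ∈ (I ^ k • ⊤ : Submodule R M) := by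
    intro k x hx
    rw [hux]
    exact Submodule.add_mem _ hx (nk k hx)
  constructor
  · intro a b hab
    have h0 : u (a - b) = 0 := by rw [map_sub, hab, sub_self]
    have hx : a - b = -(n (a - b)) :=
      eq_neg_of_add_eq_zero_left (by rw [← hux]; exact h0)
    have hall : ∀ k : ℕ, a - b ∈ (I ^ k • ⊤ : Submodule R M) := by
      intro k
      induction k with
      | zero => simp
      | succ k ih =>
          rw [hx]
          exact Submodule.neg_mem _ (key k _ ih)
    have : a - b = 0 := IsHausdorff.haus (inferInstance : IsHausdorff I M) _
      (fun k => (SModEq.zero).2 (hall k))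
    exact sub_eq_zero.mp this
  · intro y
    -- iterative approximation
    let x : ℕ → M := fun k => Nat.rec 0 (fun _ xk => xk + (y - u xk)) k
    have hxsucc : ∀ k, x (k + 1) = x k + (y - u (x k)) := fun k => rfl
    have herr : ∀ k, y - u (x k) ∈ (I ^ k • ⊤ : Submodule R M) := by
      intro k
      induction k with
      | zero => simp
      | succ k ih =>
          have : y - u (x (k + 1)) = -(n (y - u (x k))) := by
            rw [hxsucc, map_add, hux (y - u (x k))]
            abel
          rw [this]
          exact Submodule.neg_mem _ (key k _ ih)
    have hcauchy : ∀ {m k : ℕ}, m ≤ k →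
        x m ≡ x k [SMOD (I ^ m • ⊤ : Submodule R M)] := by
      intro m k
      induction k with
      | zero =>
          intro hmk
          have : m = 0 := Nat.le_zero.mp hmk
          subst this; rfl
      | succ k ih =>
          intro hmk
          rcases Nat.lt_or_ge m (k+1) with h | h
          · have hm : m ≤ k := Nat.lt_succ_iff.mp h
            refine (ih hm).trans ?_
            rw [SModEq.sub_mem, hxsucc]
            have : x k - (x k + (y - u (x k))) = -(y - u (x k)) := by abel
            rw [this]
            exact Submodule.neg_mem _
              (Submodule.smul_mono (Ideal.pow_le_pow_right hm) le_rfl (herr k))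
          · have : m = k + 1 := le_antisymm hmk h
            subst this; rfl
    obtain ⟨L, hL⟩ := IsPrecomplete.prec (inferInstance : IsPrecomplete I M) hcauchy
    refine ⟨L, ?_⟩
    have : ∀ k : ℕ, u L - y ∈ (I ^ k • ⊤ : Submodule R M) := by
      intro k
      have h1 : L - x k ∈ (I ^ k • ⊤ : Submodule R M) := by
        have := (hL k).symm; rwa [SModEq.sub_mem] at this
      have h2 : u L - u (x k) ∈ (I ^ k • ⊤ : Submodule R M) := by
        rw [← map_sub]; exact uk k h1
      have h3 : u (x k) - y ∈ (I ^ k • ⊤ : Submodule R M) := by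
        have := Submodule.neg_mem _ (herr k); simpa using this
      have heq : u L - y = (u L - u (x k)) + (u (x k) - y) := by abel
      rw [heq]; exact Submodule.add_mem _ h2 h3
    have h0 : u L - y = 0 := IsHausdorff.haus (inferInstance : IsHausdorff I M) _
      (fun k => (SModEq.zero).2 (this k))
    exact sub_eq_zero.mp h0

theorem novikov_congruent_to_identity_is_homotopy_equivalence
    {R : Type} [CommRing R] (I : Ideal R) [I.IsMaximal]
    (C : CochainComplex (ModuleCat R) ℤ)
    -- each term of `C` is complete (and separated) for the filtration
    (hcomplete : ∀ i : ℤ, IsAdicComplete I (C.X i))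
    (f : C ⟶ C)
    -- `f` is the identity modulo the maximal ideal
    (hf : ∀ (i : ℤ) (x : C.X i), f.f i x - x ∈ I • (⊤ : Submodule R (C.X i))) :
    -- `f` is a chain homotopy equivalence ...
    (∃ g : C ⟶ C,
      Nonempty (Homotopy (f ≫ g) (𝟙 C)) ∧ Nonempty (Homotopy (g ≫ f) (𝟙 C))) ∧
    -- ... and if `f ∘ f` is chain homotopic to `f` then `f` is homotopic to the identity
    (Nonempty (Homotopy (f ≫ f) f) → Nonempty (Homotopy f (𝟙 C))) := by
  have hbij : ∀ i : ℤ, Function.Bijective (f.f i) := by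
    intro i
    haveI := hcomplete i
    exact bijective_of_congr_id I (M := (C.X i).carrier) (f.f i).hom (hf i)
  haveI hiso : ∀ i : ℤ, IsIso (f.f i) := fun i =>
    ((LinearEquiv.ofBijective (f.f i).hom (hbij i)).toModuleIso).isIso_hom
  have : IsIso f := HomologicalComplex.Hom.isIso_of_components f
  refine ⟨⟨inv f, ⟨Homotopy.ofEq (IsIso.hom_inv_id f)⟩,
      ⟨Homotopy.ofEq (IsIso.inv_hom_id f)⟩⟩, ?_⟩
  rintro ⟨h⟩
  refine ⟨(Homotopy.ofEq (by simp : f = (f ≫ f) ≫ inv f)).trans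
    ((h.compRight (inv f)).trans (Homotopy.ofEq (by simp)))⟩
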